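/- Let a be a stable configuration and σ a G-strongly positive script. Then a is critical if and only if (a + σΔ)° = a. Moreover, if a is critical, then the firing script of the stabilization of a + σΔ equals σ. -/

import Mathlib

/-- A finite directed multigraph without loops on `Fin (n+1)` with global sink `Fin.last n`. -/
structure SinkDigraph (n : ℕ) where
  e : Fin (n + 1) → Fin (n + 1) → ℕ
  loopless : ∀ i, e i i = 0
  sink_no_out : ∀ j, e (Fin.last n) j = 0
  path_to_sink : ∀ i, Relation.ReflTransGen (fun u v => 0 < e u v) i (Fin.last n)

namespace SinkDigraph

variable {n : ℕ}

/-- Out-degree of a vertex. -/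
def outDeg (G : SinkDigraph n) (i : Fin (n + 1)) : ℕ := ∑ j, G.e i j

/-- The (full) Laplacian matrix over ℤ. -/
def lap (G : SinkDigraph n) : Matrix (Fin (n + 1)) (Fin (n + 1)) ℤ :=
  Matrix.of fun i j => if i = j then (G.outDeg i : ℤ) else -(G.e i j : ℤ)

/-- The reduced Laplacian (rows/columns of the sink removed). -/
def redLap (G : SinkDigraph n) : Matrix (Fin n) (Fin n) ℤ :=
  Matrix.of fun i j => G.lap i.castSucc j.castSucc

/-- The reduced Laplacian over ℚ. -/
def redLapQ (G : SinkDigraph n) : Matrix (Fin n) (Fin n) ℚ :=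
  (G.redLap).map (Int.cast : ℤ → ℚ)

/-- A ℕ-script viewed as integer vector. -/
def natScript (σ : Fin n → ℕ) : Fin n → ℤ := fun i => (σ i : ℤ)

/-- Result of firing vertex `i` in configuration `a`. -/
def fire (G : SinkDigraph n) (a : Fin n → ℤ) (i : Fin n) : Fin n → ℤ :=
  fun j => a j - G.redLap i j

/-- Result of firing a sequence of vertices. -/
def applySeq (G : SinkDigraph n) : (Fin n → ℤ) → List (Fin n) → (Fin n → ℤ)
  | a, [] => a
  | a, i :: s => G.applySeq (G.fire a i) s

/-- A firing sequence is legal from `a` if every fired vertex is active when fired. -/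
def Legal (G : SinkDigraph n) : (Fin n → ℤ) → List (Fin n) → Prop
  | _, [] => True
  | a, i :: s => G.redLap i i ≤ a i ∧ G.Legal (G.fire a i) s

/-- The firing script of a firing sequence. -/
def script (s : List (Fin n)) : Fin n → ℤ := fun i => (s.count i : ℤ)

/-- A configuration is stable if it is non-negative and no vertex is active. -/
def IsStable (G : SinkDigraph n) (a : Fin n → ℤ) : Prop :=
  ∀ i, 0 ≤ a i ∧ a i < G.redLap i i

/-- `b` is the stabilization of `a`. -/
def Stabilizes (G : SinkDigraph n) (a b : Fin n → ℤ) : Prop :=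
  ∃ s : List (Fin n), G.Legal a s ∧ G.applySeq a s = b ∧ G.IsStable b

/-- The maximal stable configuration `c_max`. -/
def cmax (G : SinkDigraph n) : Fin n → ℤ := fun i => (G.outDeg i.castSucc : ℤ) - 1

/-- A stable configuration is critical if it is the stabilization of `c_max + c`
for some non-negative `c`. -/
def IsCritical (G : SinkDigraph n) (a : Fin n → ℤ) : Prop :=
  ∃ c : Fin n → ℤ, 0 ≤ c ∧ G.Stabilizes (G.cmax + c) a

/-- `σΔ ≻ 0`, i.e. `σΔ` is non-negative and non-zero. -/
def GPositive (G : SinkDigraph n) (σ : Fin n → ℕ) : Prop :=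
  0 ≤ Matrix.vecMul (natScript σ) G.redLap ∧ Matrix.vecMul (natScript σ) G.redLap ≠ 0

/-- Reachability along directed edges. -/
def Reach (G : SinkDigraph n) : Fin (n + 1) → Fin (n + 1) → Prop :=
  Relation.ReflTransGen (fun u v => 0 < G.e u v)

/-- A source component: a strongly connected component with no in-going edge from outside. -/
def IsSourceComponent (G : SinkDigraph n) (S : Set (Fin (n + 1))) : Prop :=
  (∃ i, S = {j | G.Reach i j ∧ G.Reach j i}) ∧ ∀ j ∉ S, ∀ k ∈ S, G.e j k = 0

/-- A `G`-strongly positive script. -/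
def GStronglyPositive (G : SinkDigraph n) (σ : Fin n → ℕ) : Prop :=
  G.GPositive σ ∧ ∀ S : Set (Fin (n + 1)), G.IsSourceComponent S →
    ∃ i : Fin n, i.castSucc ∈ S ∧ Matrix.vecMul (natScript σ) G.redLap i ≠ 0

/-- Linear equivalence of configurations. -/
def Equiv (G : SinkDigraph n) (a b : Fin n → ℤ) : Prop :=
  ∃ σ : Fin n → ℤ, b - a = Matrix.vecMul σ G.redLap

/-- The weight of a configuration. -/
def weight (a : Fin n → ℤ) : ℤ := ∑ i, a i

/-- The energy (CFG) order: compare energy vectors `aΔ⁻¹` componentwise over ℚ. -/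
def cfgLE (G : SinkDigraph n) (a b : Fin n → ℤ) : Prop :=
  Matrix.vecMul (fun i => (a i : ℚ)) (G.redLapQ)⁻¹ ≤
    Matrix.vecMul (fun i => (b i : ℚ)) (G.redLapQ)⁻¹

/-- A non-negative configuration is superstable if reverse-firing any nonzero ℕ-script
produces a negative component. -/
def IsSuperstable (G : SinkDigraph n) (a : Fin n → ℤ) : Prop :=
  0 ≤ a ∧ ∀ σ : Fin n → ℕ, σ ≠ 0 →
    ∃ i, a i - Matrix.vecMul (natScript σ) G.redLap i < 0

end SinkDigraph

namespace SinkDigraph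

variable {n : ℕ} (G : SinkDigraph n)

/-! ### Basic facts about the reduced Laplacian -/

lemma redLap_eq (i j : Fin n) :
    G.redLap i j = (if i = j then (G.outDeg i.castSucc : ℤ) else 0)
      - (G.e i.castSucc j.castSucc : ℤ) := by
  by_cases h : i = j
  · subst h; simp [redLap, lap, G.loopless]
  · have h' : i.castSucc ≠ j.castSucc := fun hc => h (Fin.castSucc_injective n hc)
    simp [redLap, lap, h, h']

lemma redLap_diag (i : Fin n) : G.redLap i i = (G.outDeg i.castSucc : ℤ) := by
  simp [redLap_eq, G.loopless]

lemma redLap_offdiag {i j : Fin n} (h : i ≠ j) :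
    G.redLap i j = -(G.e i.castSucc j.castSucc : ℤ) := by
  simp [redLap_eq, h]

lemma redLap_offdiag_nonpos {i j : Fin n} (h : i ≠ j) : G.redLap i j ≤ 0 := by
  rw [G.redLap_offdiag h]; simp

lemma vecMul_redLap_apply (x : Fin n → ℤ) (j : Fin n) :
    Matrix.vecMul x G.redLap j = ∑ i, x i * G.redLap i j := by
  simp [Matrix.vecMul, dotProduct]

lemma redLap_rowSum (i : Fin n) :
    ∑ j, G.redLap i j = (G.e i.castSucc (Fin.last n) : ℤ) := by
  have h1 : ∑ j : Fin n, G.redLap i j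
      = (G.outDeg i.castSucc : ℤ) - ∑ j : Fin n, (G.e i.castSucc j.castSucc : ℤ) := by
    simp only [redLap_eq, Finset.sum_sub_distrib, Finset.sum_ite_eq, Finset.mem_univ,
      if_true]
  rw [h1]
  have h2 : (G.outDeg i.castSucc : ℤ)
      = ∑ j : Fin n, (G.e i.castSucc j.castSucc : ℤ) + (G.e i.castSucc (Fin.last n) : ℤ) := by
    have := Fin.sum_univ_castSucc (n := n) (f := fun j => (G.e i.castSucc j : ℤ))
    simp only [outDeg]
    push_cast
    rw [this]
  rw [h2]; ring

/-! ### Basic facts about firing sequences -/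

lemma fire_apply (a : Fin n → ℤ) (i j : Fin n) : G.fire a i j = a j - G.redLap i j := rfl

lemma applySeq_apply (s : List (Fin n)) (a : Fin n → ℤ) (j : Fin n) :
    G.applySeq a s j = a j - ∑ i, ((s.count i : ℤ) * G.redLap i j) := by
  induction s generalizing a with
  | nil => simp [applySeq]
  | cons i s ih =>
    have hcount : ∀ k : Fin n, ((i :: s).count k : ℤ)
        = (s.count k : ℤ) + if k = i then 1 else 0 := by
      intro k
      rcases eq_or_ne k i with h | h
      · subst h; simp [List.count_cons]
      · simp [List.count_cons, h, Ne.symm h]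
    simp only [applySeq, ih, fire_apply]
    have : ∑ k, (((i :: s).count k : ℤ) * G.redLap k j)
        = ∑ k, ((s.count k : ℤ) * G.redLap k j) + G.redLap i j := by
      simp only [hcount, add_mul, ite_mul, one_mul, zero_mul, Finset.sum_add_distrib,
        Finset.sum_ite_eq', Finset.mem_univ, if_true]
    rw [this]; ring

lemma applySeq_eq_sub_vecMul (s : List (Fin n)) (a : Fin n → ℤ) :
    G.applySeq a s = a - Matrix.vecMul (script s) G.redLap := by
  funext j
  rw [Pi.sub_apply, G.vecMul_redLap_apply, applySeq_apply]
  rfl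

lemma applySeq_append (s t : List (Fin n)) (a : Fin n → ℤ) :
    G.applySeq a (s ++ t) = G.applySeq (G.applySeq a s) t := by
  induction s generalizing a with
  | nil => simp [applySeq]
  | cons i s ih => simp [applySeq, ih]

lemma Legal_append {s t : List (Fin n)} {a : Fin n → ℤ} :
    G.Legal a (s ++ t) ↔ G.Legal a s ∧ G.Legal (G.applySeq a s) t := by
  induction s generalizing a with
  | nil => simp [Legal, applySeq]
  | cons i s ih => simp [Legal, applySeq, ih, and_assoc]

lemma fire_add (a y : Fin n → ℤ) (i : Fin n) :
    G.fire (a + y) i = G.fire a i + y := by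
  funext j; simp [fire_apply]; ring

lemma Legal_add_of_nonneg {a : Fin n → ℤ} {s : List (Fin n)} (hs : G.Legal a s)
    {y : Fin n → ℤ} (hy : 0 ≤ y) : G.Legal (a + y) s := by
  induction s generalizing a with
  | nil => trivial
  | cons i s ih =>
    obtain ⟨h1, h2⟩ := hs
    refine ⟨le_trans h1 ?_, ?_⟩
    · have h3 := hy i; simp only [Pi.zero_apply] at h3; simp only [Pi.add_apply]; omega
    rw [G.fire_add]
    exact ih h2

lemma applySeq_add (s : List (Fin n)) (a y : Fin n → ℤ) :
    G.applySeq (a + y) s = G.applySeq a s + y := by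
  induction s generalizing a with
  | nil => rfl
  | cons i s ih => simp [applySeq, G.fire_add, ih]

lemma fire_nonneg {a : Fin n → ℤ} (ha : 0 ≤ a) {i : Fin n} (h : G.redLap i i ≤ a i) :
    0 ≤ G.fire a i := by
  intro j
  rcases eq_or_ne j i with rfl | hne
  · simpa [fire_apply] using h
  · have := G.redLap_offdiag_nonpos (Ne.symm hne)
    have : G.redLap i j ≤ 0 := this
    have h4 := ha j
    simp only [Pi.zero_apply] at h4 ⊢
    simp only [fire_apply]
    omega

lemma applySeq_nonneg {a : Fin n → ℤ} {s : List (Fin n)} (hs : G.Legal a s) (ha : 0 ≤ a) :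
    0 ≤ G.applySeq a s := by
  induction s generalizing a with
  | nil => exact ha
  | cons i s ih => exact ih hs.2 (G.fire_nonneg ha hs.1)

lemma length_eq_sum_count (s : List (Fin n)) : (s.length : ℤ) = ∑ i, (s.count i : ℤ) := by
  induction s with
  | nil => simp
  | cons i s ih =>
    have : ∀ k : Fin n, ((i :: s).count k : ℤ)
        = (s.count k : ℤ) + if k = i then 1 else 0 := by
      intro k
      rcases eq_or_ne k i with h | h
      · subst h; simp [List.count_cons]
      · simp [List.count_cons, h, Ne.symm h]
    simp only [this, Finset.sum_add_distrib, Finset.sum_ite_eq', Finset.mem_univ, if_true,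
      ← ih, List.length_cons]
    push_cast; ring

/-! ### The reduced Laplacian is nonsingular -/

lemma redLapQ_apply (i j : Fin n) :
    G.redLapQ i j = (if i = j then (G.outDeg i.castSucc : ℚ) else 0)
      - (G.e i.castSucc j.castSucc : ℚ) := by
  simp only [redLapQ, Matrix.map_apply, redLap_eq]
  push_cast
  split <;> simp

lemma kernel_nonpos (v : Fin n → ℚ) (hv : G.redLapQ.mulVec v = 0) (i : Fin n) : v i ≤ 0 := by
  classical
  set w : Fin (n + 1) → ℚ := Fin.snoc v 0 with hw
  have wlast : w (Fin.last n) = 0 := by simp [hw]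
  have wcast : ∀ j : Fin n, w j.castSucc = v j := by intro j; simp [hw]
  have harm : ∀ i : Fin n, (G.outDeg i.castSucc : ℚ) * w i.castSucc
      = ∑ j, (G.e i.castSucc j : ℚ) * w j := by
    intro i
    have h0 : ∑ j, G.redLapQ i j * v j = 0 := by
      have := congrFun hv i
      simpa [Matrix.mulVec, dotProduct] using this
    have h1 : ∑ j, G.redLapQ i j * v j
        = (G.outDeg i.castSucc : ℚ) * v i - ∑ j, (G.e i.castSucc j.castSucc : ℚ) * v j := by
      simp only [redLapQ_apply, sub_mul, ite_mul, zero_mul, Finset.sum_sub_distrib,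
        Finset.sum_ite_eq, Finset.mem_univ, if_true]
    have h2 : ∑ j : Fin (n + 1), (G.e i.castSucc j : ℚ) * w j
        = ∑ j : Fin n, (G.e i.castSucc j.castSucc : ℚ) * v j := by
      rw [Fin.sum_univ_castSucc]
      simp [wlast, wcast]
    rw [h2, wcast]
    have := h0; rw [h1] at this; linarith
  have key : ∀ u y : Fin (n + 1), (∀ z, w z ≤ w u) → 0 < G.e u y → w y = w u := by
    intro u y hmax he
    have hu : u ≠ Fin.last n := by
      intro h; rw [h, G.sink_no_out] at he; exact lt_irrefl 0 he
    obtain ⟨i, rfl⟩ := Fin.exists_castSucc_eq.2 hu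
    have hle : ∀ j ∈ Finset.univ, (G.e i.castSucc j : ℚ) * w j
        ≤ (G.e i.castSucc j : ℚ) * w i.castSucc := by
      intro j _
      exact mul_le_mul_of_nonneg_left (hmax j) (by positivity)
    have hsum : ∑ j, (G.e i.castSucc j : ℚ) * w j
        = ∑ j, (G.e i.castSucc j : ℚ) * w i.castSucc := by
      rw [← harm i]
      rw [← Finset.sum_mul]
      have : ∑ j, (G.e i.castSucc j : ℚ) = (G.outDeg i.castSucc : ℚ) := by
        simp [outDeg]
      rw [this, mul_comm]
    have heach := (Finset.sum_eq_sum_iff_of_le hle).1 hsum y (Finset.mem_univ y)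
    have hy : (G.e i.castSucc y : ℚ) ≠ 0 := by
      have : G.e i.castSucc y ≠ 0 := Nat.pos_iff_ne_zero.1 he
      exact_mod_cast this
    exact mul_left_cancel₀ hy heach
  have main : ∀ u : Fin (n + 1), G.Reach u (Fin.last n) → (∀ z, w z ≤ w u) → w u = 0 := by
    intro u hreach
    induction hreach using Relation.ReflTransGen.head_induction_on with
    | refl => intro _; exact wlast
    | head hstep _ ih =>
      rename_i p q hq
      intro hmax
      have hq' : w q = w p := key p q hmax hstep
      have : w q = 0 := ih (fun z => hq' ▸ hmax z)
      rw [← hq', this]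
  obtain ⟨u0, -, hu0⟩ := Finset.exists_max_image Finset.univ w ⟨Fin.last n, Finset.mem_univ _⟩
  have h0 : w u0 = 0 := main u0 (G.path_to_sink u0) (fun z => hu0 z (Finset.mem_univ z))
  calc v i = w i.castSucc := (wcast i).symm
    _ ≤ w u0 := hu0 _ (Finset.mem_univ _)
    _ = 0 := h0

lemma kernel_eq_zero (v : Fin n → ℚ) (hv : G.redLapQ.mulVec v = 0) : v = 0 := by
  have h1 : ∀ i, v i ≤ 0 := G.kernel_nonpos v hv
  have hv' : G.redLapQ.mulVec (-v) = 0 := by rw [Matrix.mulVec_neg, hv]; simp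
  have h2 : ∀ i, -v i ≤ 0 := fun i => by simpa using G.kernel_nonpos (-v) hv' i
  funext i
  have := h1 i; have := h2 i
  simp only [Pi.zero_apply]
  linarith

lemma redLapQ_det_ne_zero : G.redLapQ.det ≠ 0 := by
  intro hdet
  obtain ⟨v, hv0, hv⟩ := (Matrix.exists_mulVec_eq_zero_iff).2 hdet
  exact hv0 (G.kernel_eq_zero v hv)

lemma vecMul_redLap_injective {x y : Fin n → ℤ}
    (h : Matrix.vecMul x G.redLap = Matrix.vecMul y G.redLap) : x = y := by
  have hQ : Matrix.vecMul (fun i => (x i : ℚ)) G.redLapQ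
      = Matrix.vecMul (fun i => (y i : ℚ)) G.redLapQ := by
    funext j
    have hj := congrFun h j
    simp only [Matrix.vecMul, dotProduct, redLapQ, Matrix.map_apply] at *
    exact_mod_cast hj
  have hunit : IsUnit G.redLapQ.det := isUnit_iff_ne_zero.2 G.redLapQ_det_ne_zero
  have : ∀ z : Fin n → ℚ, Matrix.vecMul (Matrix.vecMul z G.redLapQ) G.redLapQ⁻¹ = z := by
    intro z
    rw [Matrix.vecMul_vecMul, Matrix.mul_nonsing_inv _ hunit, Matrix.vecMul_one]
  have hxy : (fun i => (x i : ℚ)) = fun i => (y i : ℚ) := by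
    rw [← this (fun i => (x i : ℚ)), ← this (fun i => (y i : ℚ)), hQ]
  funext i
  have := congrFun hxy i
  exact_mod_cast this

/-! ### Least action principle and the abelian property -/

lemma sum_count_mul_nonpos (t : List (Fin n)) {i : Fin n} (hi : i ∉ t) :
    ∑ k, ((t.count k : ℤ) * G.redLap k i) ≤ 0 := by
  apply Finset.sum_nonpos
  intro k _
  rcases eq_or_ne k i with rfl | hne
  · simp [List.count_eq_zero_of_not_mem hi]
  · have h1 : (0:ℤ) ≤ (t.count k : ℤ) := by positivity
    have h2 := G.redLap_offdiag_nonpos hne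
    exact mul_nonpos_of_nonneg_of_nonpos h1 h2

lemma mem_of_active {x : Fin n → ℤ} {t : List (Fin n)} (ht : G.Legal x t)
    (hstab : G.IsStable (G.applySeq x t)) {i : Fin n} (hi : G.redLap i i ≤ x i) :
    i ∈ t := by
  by_contra hmem
  have h1 := G.applySeq_apply t x i
  have h2 := G.sum_count_mul_nonpos t hmem
  have h3 := (hstab i).2
  omega

lemma fire_comm (x : Fin n → ℤ) (i j : Fin n) :
    G.fire (G.fire x i) j = G.fire (G.fire x j) i := by
  funext k; simp [fire_apply]; ring

lemma bring_to_front {t : List (Fin n)} {x : Fin n → ℤ} (ht : G.Legal x t) {i : Fin n}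
    (hmem : i ∈ t) (hi : G.redLap i i ≤ x i) :
    G.Legal x (i :: t.erase i) ∧ G.applySeq x (i :: t.erase i) = G.applySeq x t := by
  induction t generalizing x with
  | nil => cases hmem
  | cons j t' ih =>
    rcases eq_or_ne j i with rfl | hne
    · rw [List.erase_cons_head]
      exact ⟨ht, rfl⟩
    · have hmem' : i ∈ t' := by
        cases hmem with
        | head => exact absurd rfl hne
        | tail _ h => exact h
      obtain ⟨hj, ht'⟩ := ht
      have hfire : G.redLap i i ≤ G.fire x j i := by
        have := G.redLap_offdiag_nonpos hne
        simp only [fire_apply]; omega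
      obtain ⟨ihL, ihA⟩ := ih ht' hmem' hfire
      obtain ⟨hii, ihL'⟩ := ihL
      rw [List.erase_cons_tail]
      constructor
      · refine ⟨hi, ?_, ?_⟩
        · have := G.redLap_offdiag_nonpos (Ne.symm hne)
          simp only [fire_apply]; omega
        · rw [G.fire_comm]
          exact ihL'
      · show G.applySeq (G.fire (G.fire x i) j) (t'.erase i) = G.applySeq (G.fire x j) t'
        rw [G.fire_comm]
        have : G.applySeq (G.fire (G.fire x j) i) (t'.erase i)
            = G.applySeq (G.fire x j) (i :: t'.erase i) := rfl
        rw [this, ihA]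
      · simp [hne]

lemma least_action {s t : List (Fin n)} {x : Fin n → ℤ} (hs : G.Legal x s)
    (ht : G.Legal x t) (hstab : G.IsStable (G.applySeq x t)) :
    ∀ i, s.count i ≤ t.count i := by
  induction s generalizing x t with
  | nil => intro i; simp
  | cons v s' ih =>
    obtain ⟨hv, hs'⟩ := hs
    have hmem : v ∈ t := G.mem_of_active ht hstab hv
    obtain ⟨⟨-, hL⟩, hA⟩ := G.bring_to_front ht hmem hv
    have hstab' : G.IsStable (G.applySeq (G.fire x v) (t.erase v)) := by
      have hAA : G.applySeq (G.fire x v) (t.erase v) = G.applySeq x t := hA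
      rw [hAA]; exact hstab
    have hcount := ih hs' hL hstab'
    intro j
    have hcj := hcount j
    rcases eq_or_ne j v with rfl | hne
    · have h1 : (t.erase j).count j = t.count j - 1 := List.count_erase_self
      have h2 : 1 ≤ t.count j := List.count_pos_iff.2 hmem
      simp only [List.count_cons_self]
      omega
    · rw [List.count_cons_of_ne hne.symm]
      rwa [List.count_erase_of_ne hne] at hcj

/-- The abelian property: any two legal stabilizing sequences have the same counts. -/
lemma abelian {s t : List (Fin n)} {x : Fin n → ℤ} (hs : G.Legal x s)
    (hstabs : G.IsStable (G.applySeq x s)) (ht : G.Legal x t)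
    (hstabt : G.IsStable (G.applySeq x t)) : ∀ i, s.count i = t.count i := by
  intro i
  exact le_antisymm (G.least_action hs ht hstabt i) (G.least_action ht hs hstabs i)

lemma abelian_endpoint {s t : List (Fin n)} {x : Fin n → ℤ} (hs : G.Legal x s)
    (hstabs : G.IsStable (G.applySeq x s)) (ht : G.Legal x t)
    (hstabt : G.IsStable (G.applySeq x t)) : G.applySeq x s = G.applySeq x t := by
  have h := G.abelian hs hstabs ht hstabt
  funext j
  rw [G.applySeq_apply, G.applySeq_apply]
  congr 1
  apply Finset.sum_congr rfl
  intro k _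
  rw [h k]

/-! ### Termination: every nonnegative configuration stabilizes -/

lemma redLap_diag_nonneg (i : Fin n) : 0 ≤ G.redLap i i := by
  rw [G.redLap_diag]; positivity

/-- A uniform bound on the diagonal entries. -/
def degSum (G : SinkDigraph n) : ℤ := ∑ i, G.redLap i i

lemma degSum_nonneg : 0 ≤ G.degSum :=
  Finset.sum_nonneg fun i _ => G.redLap_diag_nonneg i

lemma diag_le_degSum (i : Fin n) : G.redLap i i ≤ G.degSum :=
  Finset.single_le_sum (fun j (_ : j ∈ Finset.univ) => G.redLap_diag_nonneg j)
    (Finset.mem_univ i)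

lemma apply_le_weight {y : Fin n → ℤ} (hy : 0 ≤ y) (j : Fin n) : y j ≤ weight y := by
  have h := Finset.single_le_sum (f := y) (fun k (_ : k ∈ Finset.univ) => hy k)
    (Finset.mem_univ j)
  exact h

lemma weight_nonneg {y : Fin n → ℤ} (hy : 0 ≤ y) : 0 ≤ weight y :=
  Finset.sum_nonneg fun i _ => hy i

lemma weight_applySeq (s : List (Fin n)) (x : Fin n → ℤ) :
    weight (G.applySeq x s) = weight x
      - ∑ i, (s.count i : ℤ) * (G.e i.castSucc (Fin.last n) : ℤ) := by
  unfold weight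
  simp only [G.applySeq_apply, Finset.sum_sub_distrib]
  congr 1
  rw [Finset.sum_comm]
  apply Finset.sum_congr rfl
  intro i _
  rw [← Finset.mul_sum, G.redLap_rowSum]

section Bounds

lemma count_sink_bound {x : Fin n → ℤ} (hx : 0 ≤ x) {s : List (Fin n)} (hs : G.Legal x s) (i : Fin n) :
    (s.count i : ℤ) * (G.e i.castSucc (Fin.last n) : ℤ) ≤ weight x := by
  have h1 : 0 ≤ weight (G.applySeq x s) := weight_nonneg (G.applySeq_nonneg hs hx)
  have h2 := G.weight_applySeq s x
  have h3 : ∑ k, (s.count k : ℤ) * (G.e k.castSucc (Fin.last n) : ℤ) ≤ weight x := by omega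
  calc (s.count i : ℤ) * (G.e i.castSucc (Fin.last n) : ℤ)
      ≤ ∑ k, (s.count k : ℤ) * (G.e k.castSucc (Fin.last n) : ℤ) :=
        Finset.single_le_sum (f := fun k => (s.count k : ℤ) * (G.e k.castSucc (Fin.last n) : ℤ))
          (fun k _ => by positivity) (Finset.mem_univ i)
    _ ≤ weight x := h3

lemma count_edge_bound {x : Fin n → ℤ} (hx : 0 ≤ x) {s : List (Fin n)} (hs : G.Legal x s) {i j : Fin n} (hij : i ≠ j) :
    (s.count i : ℤ) * (G.e i.castSucc j.castSucc : ℤ)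
      ≤ weight x + (s.count j : ℤ) * G.redLap j j := by
  have hfin : G.applySeq x s j ≤ weight x :=
    le_trans (apply_le_weight (G.applySeq_nonneg hs hx) j)
      (by rw [G.weight_applySeq]
          have : 0 ≤ ∑ k, (s.count k : ℤ) * (G.e k.castSucc (Fin.last n) : ℤ) :=
            Finset.sum_nonneg fun k _ => by positivity
          omega)
  rw [G.applySeq_apply] at hfin
  have hsplit : ∑ k, ((s.count k : ℤ) * G.redLap k j)
      = (s.count j : ℤ) * G.redLap j j
        + ∑ k ∈ Finset.univ.erase j, (s.count k : ℤ) * G.redLap k j := by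
    exact (Finset.add_sum_erase _ _ (Finset.mem_univ j)).symm
  have hterm : ∀ k ∈ Finset.univ.erase j, (s.count k : ℤ) * G.redLap k j
      = -((s.count k : ℤ) * (G.e k.castSucc j.castSucc : ℤ)) := by
    intro k hk
    rw [G.redLap_offdiag (Finset.ne_of_mem_erase hk)]; ring
  rw [Finset.sum_congr rfl hterm, Finset.sum_neg_distrib] at hsplit
  have hxj := hx j
  simp only [Pi.zero_apply] at hxj
  have hle : (s.count i : ℤ) * (G.e i.castSucc j.castSucc : ℤ)
      ≤ ∑ k ∈ Finset.univ.erase j, (s.count k : ℤ) * (G.e k.castSucc j.castSucc : ℤ) :=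
    Finset.single_le_sum (f := fun k => (s.count k : ℤ) * (G.e k.castSucc j.castSucc : ℤ))
      (fun k _ => by positivity) (Finset.mem_erase.2 ⟨hij, Finset.mem_univ i⟩)
  omega

/-- Geometric bounding function. -/
noncomputable def MB (G : SinkDigraph n) (x : Fin n → ℤ) (k : ℕ) : ℤ :=
  (G.degSum + 1) ^ k * (weight x + 1)

lemma MB_nonneg {x : Fin n → ℤ} (hx : 0 ≤ x) (k : ℕ) : 0 ≤ G.MB x k := by
  unfold MB
  have h1 := G.degSum_nonneg
  have h2 := weight_nonneg hx
  positivity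

lemma weight_le_MB {x : Fin n → ℤ} (hx : 0 ≤ x) (k : ℕ) : weight x ≤ G.MB x k := by
  unfold MB
  have h1 := G.degSum_nonneg
  have h2 := weight_nonneg hx
  have hpow : (1:ℤ) ≤ (G.degSum + 1) ^ k := one_le_pow₀ (by omega)
  nlinarith

lemma MB_succ {x : Fin n → ℤ} (hx : 0 ≤ x) (k : ℕ) : weight x + G.degSum * G.MB x k ≤ G.MB x (k + 1) := by
  have h1 := G.degSum_nonneg
  have h2 := weight_nonneg hx
  have h3 := G.MB_nonneg hx k
  have hpow : (1:ℤ) ≤ (G.degSum + 1) ^ k := one_le_pow₀ (by omega)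
  unfold MB at *
  rw [pow_succ]
  nlinarith

lemma count_bound {x : Fin n → ℤ} (hx : 0 ≤ x) {u : Fin (n + 1)} (hu : G.Reach u (Fin.last n)) :
    ∃ k : ℕ, ∀ s : List (Fin n), G.Legal x s → ∀ i : Fin n, i.castSucc = u →
      (s.count i : ℤ) ≤ G.MB x k := by
  induction hu using Relation.ReflTransGen.head_induction_on with
  | refl =>
    refine ⟨0, fun s _ i hi => absurd hi ?_⟩
    exact (Fin.castSucc_lt_last i).ne
  | head hstep _ ih =>
    rename_i p q hq
    obtain ⟨k, hk⟩ := ih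
    refine ⟨k + 1, fun s hs i hi => ?_⟩
    subst hi
    have hci : (0:ℤ) ≤ (s.count i : ℤ) := by positivity
    have he1 : (1:ℤ) ≤ (G.e i.castSucc q : ℤ) := by exact_mod_cast hstep
    rcases eq_or_ne q (Fin.last n) with rfl | hql
    · have hb := G.count_sink_bound hx hs i
      have : (s.count i : ℤ) ≤ weight x := by nlinarith
      exact le_trans this (G.weight_le_MB hx _)
    · obtain ⟨j, rfl⟩ := Fin.exists_castSucc_eq.2 hql
      have hij : i ≠ j := by
        rintro rfl
        rw [G.loopless] at hstep
        exact lt_irrefl 0 hstep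
      have hb := G.count_edge_bound hx hs hij
      have hcj := hk s hs j rfl
      have hcj0 : (0:ℤ) ≤ (s.count j : ℤ) := by positivity
      have hdj := G.redLap_diag_nonneg j
      have hdD := G.diag_le_degSum j
      have h1 : (s.count i : ℤ) ≤ weight x + G.degSum * G.MB x k := by nlinarith
      exact le_trans h1 (G.MB_succ hx k)

lemma length_bound {x : Fin n → ℤ} (hx : 0 ≤ x) : ∃ L : ℕ, ∀ s : List (Fin n), G.Legal x s → s.length ≤ L := by
  classical
  choose k hk using fun i : Fin n => G.count_bound hx (G.path_to_sink i.castSucc)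
  refine ⟨(∑ i, G.MB x (k i)).toNat, fun s hs => ?_⟩
  have h1 : (s.length : ℤ) ≤ ∑ i, G.MB x (k i) := by
    rw [length_eq_sum_count]
    exact Finset.sum_le_sum fun i _ => hk i s hs i rfl
  omega

end Bounds

lemma exists_stab_fuel : ∀ (fuel : ℕ) (x : Fin n → ℤ), 0 ≤ x →
    (∀ s : List (Fin n), G.Legal x s → s.length ≤ fuel) →
    ∃ s, G.Legal x s ∧ G.IsStable (G.applySeq x s) := by
  intro fuel
  induction fuel with
  | zero =>
    intro x hx hbound
    by_cases hstable : G.IsStable x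
    · exact ⟨[], trivial, hstable⟩
    · exfalso
      simp only [IsStable, not_forall] at hstable
      obtain ⟨i, hi⟩ := hstable
      have hxi := hx i
      simp only [Pi.zero_apply] at hxi
      have hact : G.redLap i i ≤ x i := by
        by_contra h
        exact hi ⟨hxi, by omega⟩
      have := hbound [i] ⟨hact, trivial⟩
      simp at this
  | succ fuel ih =>
    intro x hx hbound
    by_cases hstable : G.IsStable x
    · exact ⟨[], trivial, hstable⟩
    · simp only [IsStable, not_forall] at hstable
      obtain ⟨i, hi⟩ := hstable
      have hxi := hx i
      simp only [Pi.zero_apply] at hxi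
      have hact : G.redLap i i ≤ x i := by
        by_contra h
        exact hi ⟨hxi, by omega⟩
      have hfx : 0 ≤ G.fire x i := G.fire_nonneg hx hact
      have hbound' : ∀ s : List (Fin n), G.Legal (G.fire x i) s → s.length ≤ fuel := by
        intro s hs
        have := hbound (i :: s) ⟨hact, hs⟩
        simpa using this
      obtain ⟨s, hsL, hsS⟩ := ih (G.fire x i) hfx hbound'
      exact ⟨i :: s, ⟨hact, hsL⟩, hsS⟩

lemma exists_stabilizes {x : Fin n → ℤ} (hx : 0 ≤ x) : ∃ b, G.Stabilizes x b := by
  obtain ⟨L, hL⟩ := G.length_bound hx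
  obtain ⟨s, hsL, hsS⟩ := G.exists_stab_fuel L x hx hL
  exact ⟨G.applySeq x s, s, hsL, rfl, hsS⟩

/-! ### Some vertex in the support of a nonzero script gains when reverse-fired -/

lemma exit_exists {r : Fin (n+1) → Fin (n+1) → Prop} {P : Fin (n+1) → Prop} :
    ∀ {x y : Fin (n+1)}, Relation.ReflTransGen r x y → P x → ¬ P y →
      ∃ p q, P p ∧ ¬ P q ∧ r p q := by
  intro x y hxy
  induction hxy using Relation.ReflTransGen.head_induction_on with
  | refl => intro h h'; exact absurd h h'
  | head hstep _ ih =>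
    rename_i p q hq
    intro hp hy
    by_cases hPq : P q
    · exact ih hPq hy
    · exact ⟨p, q, hp, hPq, hstep⟩

lemma exists_pos_at_boundary (τ : Fin n → ℕ) (hτ : τ ≠ 0) :
    ∃ v : Fin n, τ v ≠ 0 ∧ 1 ≤ Matrix.vecMul (natScript τ) G.redLap v := by
  classical
  set S : Finset (Fin n) := Finset.univ.filter (fun v => τ v ≠ 0) with hS
  have hSne : S.Nonempty := by
    by_contra h
    apply hτ
    funext i
    have : i ∉ S := fun hi => h ⟨i, hi⟩
    simpa [hS] using this
  obtain ⟨w, hw⟩ := hSne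
  have hwS : τ w ≠ 0 := by simpa [hS] using hw
  -- find a vertex of S with an out-edge leaving (the castSucc image of) S
  have hexit : ∃ p q, (∃ v ∈ S, p = v.castSucc) ∧ ¬ (∃ v ∈ S, q = v.castSucc)
      ∧ 0 < G.e p q := by
    refine exit_exists (G.path_to_sink w.castSucc) ⟨w, hw, rfl⟩ ?_
    rintro ⟨v, -, hv⟩
    exact (Fin.castSucc_lt_last v).ne' hv
  obtain ⟨p, q, ⟨w', hw'S, rfl⟩, hqout, hpq⟩ := hexit
  -- the sum of (τΔ) over S is at least 1
  have hR : ∀ i ∈ S, 0 ≤ ∑ v ∈ S, G.redLap i v := by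
    intro i hi
    have h1 : ∑ v ∈ S, G.redLap i v
        = (G.outDeg i.castSucc : ℤ) - ∑ v ∈ S, (G.e i.castSucc v.castSucc : ℤ) := by
      simp only [redLap_eq, Finset.sum_sub_distrib]
      congr 1
      rw [Finset.sum_ite_eq _ i (fun _ => (G.outDeg i.castSucc : ℤ))]
      simp [hi]
    have himgsum : ∑ z ∈ S.image Fin.castSucc, (G.e i.castSucc z : ℤ)
        = ∑ v ∈ S, (G.e i.castSucc v.castSucc : ℤ) :=
      Finset.sum_image (fun a _ b _ h => Fin.castSucc_injective n h)
    have h2 : ∑ v ∈ S, (G.e i.castSucc v.castSucc : ℤ)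
        ≤ (G.outDeg i.castSucc : ℤ) := by
      rw [← himgsum]
      refine le_trans (Finset.sum_le_sum_of_subset_of_nonneg (Finset.subset_univ _)
        (fun z _ _ => by positivity)) ?_
      simp only [outDeg]
      push_cast
      exact le_refl _
    omega
  have hRw' : 1 ≤ ∑ v ∈ S, G.redLap w' v := by
    have h1 : ∑ v ∈ S, G.redLap w' v
        = (G.outDeg w'.castSucc : ℤ) - ∑ v ∈ S, (G.e w'.castSucc v.castSucc : ℤ) := by
      simp only [redLap_eq, Finset.sum_sub_distrib]
      congr 1
      rw [Finset.sum_ite_eq _ w' (fun _ => (G.outDeg w'.castSucc : ℤ))]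
      simp [hw'S]
    have himg : q ∉ S.image (Fin.castSucc) := by
      intro hq
      obtain ⟨v, hv, hvq⟩ := Finset.mem_image.1 hq
      exact hqout ⟨v, hv, hvq.symm⟩
    have himgsum : ∑ z ∈ S.image Fin.castSucc, (G.e w'.castSucc z : ℤ)
        = ∑ v ∈ S, (G.e w'.castSucc v.castSucc : ℤ) :=
      Finset.sum_image (fun a _ b _ h => Fin.castSucc_injective n h)
    have h2 : ∑ v ∈ S, (G.e w'.castSucc v.castSucc : ℤ) + (G.e w'.castSucc q : ℤ)
        ≤ (G.outDeg w'.castSucc : ℤ) := by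
      rw [← himgsum, add_comm]
      have hins := Finset.sum_insert (f := fun z => (G.e w'.castSucc z : ℤ)) himg
      rw [← hins]
      refine le_trans (Finset.sum_le_sum_of_subset_of_nonneg (Finset.subset_univ _)
        (fun z _ _ => by positivity)) ?_
      simp only [outDeg]
      push_cast
      exact le_refl _
    have h3 : (1:ℤ) ≤ (G.e w'.castSucc q : ℤ) := by exact_mod_cast hpq
    omega
  have hsum : 1 ≤ ∑ v ∈ S, Matrix.vecMul (natScript τ) G.redLap v := by
    have h1 : ∑ v ∈ S, Matrix.vecMul (natScript τ) G.redLap v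
        = ∑ i ∈ S, (τ i : ℤ) * (∑ v ∈ S, G.redLap i v) := by
      calc ∑ v ∈ S, Matrix.vecMul (natScript τ) G.redLap v
          = ∑ v ∈ S, ∑ i : Fin n, natScript τ i * G.redLap i v := by
            simp only [vecMul_redLap_apply]
        _ = ∑ i : Fin n, ∑ v ∈ S, natScript τ i * G.redLap i v := Finset.sum_comm
        _ = ∑ i ∈ S, ∑ v ∈ S, natScript τ i * G.redLap i v := by
            refine (Finset.sum_subset (Finset.subset_univ S) ?_).symm
            intro i _ hi
            have hz : τ i = 0 := by
              by_contra h
              exact hi (by simp [hS, h])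
            apply Finset.sum_eq_zero
            intro v _
            simp [natScript, hz]
        _ = ∑ i ∈ S, (τ i : ℤ) * (∑ v ∈ S, G.redLap i v) := by
            apply Finset.sum_congr rfl
            intro i _
            rw [Finset.mul_sum]
            rfl
    rw [h1]
    have hterm : ∀ i ∈ S, 0 ≤ (τ i : ℤ) * (∑ v ∈ S, G.redLap i v) := by
      intro i hi
      exact mul_nonneg (by positivity) (hR i hi)
    have hw'term : 1 ≤ (τ w' : ℤ) * (∑ v ∈ S, G.redLap w' v) := by
      have hτw' : 1 ≤ (τ w' : ℤ) := by
        have : τ w' ≠ 0 := by simpa [hS] using hw'S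
        omega
      nlinarith
    calc (1:ℤ) ≤ (τ w' : ℤ) * (∑ v ∈ S, G.redLap w' v) := hw'term
      _ ≤ ∑ i ∈ S, (τ i : ℤ) * (∑ v ∈ S, G.redLap i v) :=
          Finset.single_le_sum (f := fun i => (τ i : ℤ) * (∑ v ∈ S, G.redLap i v))
            hterm hw'S
  by_contra hcon
  push_neg at hcon
  have : ∑ v ∈ S, Matrix.vecMul (natScript τ) G.redLap v ≤ 0 := by
    apply Finset.sum_nonpos
    intro v hv
    have h1 := hcon v (by simpa [hS] using hv)
    omega
  omega

lemma cmax_eq (v : Fin n) : G.cmax v = G.redLap v v - 1 := by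
  rw [redLap_diag]; rfl

/-- From any configuration at least `cmax + τΔ`, the script `τ` can be fired legally. -/
lemma legal_script : ∀ (m : ℕ) (τ : Fin n → ℕ), (∑ i, τ i) = m → ∀ x : Fin n → ℤ,
    (∀ v, G.cmax v + Matrix.vecMul (natScript τ) G.redLap v ≤ x v) →
    ∃ s, G.Legal x s ∧ (∀ i, s.count i = τ i)
      ∧ G.applySeq x s = fun v => x v - Matrix.vecMul (natScript τ) G.redLap v := by
  intro m
  induction m with
  | zero =>
    intro τ hτ x hx
    have hτ0 : ∀ i, τ i = 0 := by
      intro i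
      exact (Finset.sum_eq_zero_iff).1 hτ i (Finset.mem_univ i)
    refine ⟨[], trivial, fun i => by simp [hτ0], ?_⟩
    funext v
    have : Matrix.vecMul (natScript τ) G.redLap v = 0 := by
      rw [vecMul_redLap_apply]
      apply Finset.sum_eq_zero
      intro i _
      simp [natScript, hτ0]
    simp [applySeq, this]
  | succ m ih =>
    intro τ hτ x hx
    have hτne : τ ≠ 0 := by
      intro h
      rw [h] at hτ
      simp at hτ
    obtain ⟨v, hv, hv1⟩ := G.exists_pos_at_boundary τ hτne
    have hact : G.redLap v v ≤ x v := by
      have := hx v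
      rw [G.cmax_eq] at this
      omega
    set τ' : Fin n → ℕ := Function.update τ v (τ v - 1) with hτ'
    have hτ'v : τ' v = τ v - 1 := by simp [hτ']
    have hτ'w : ∀ w, w ≠ v → τ' w = τ w := by
      intro w hw; simp [hτ', hw]
    have hvecτ' : ∀ j, Matrix.vecMul (natScript τ') G.redLap j
        = Matrix.vecMul (natScript τ) G.redLap j - G.redLap v j := by
      intro j
      rw [vecMul_redLap_apply, vecMul_redLap_apply]
      have hptw : ∀ i, (natScript τ i) * G.redLap i j
          = natScript τ' i * G.redLap i j + (if i = v then G.redLap v j else 0) := by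
        intro i
        rcases eq_or_ne i v with rfl | hne
        · simp only [if_pos rfl, natScript, hτ'v]
          have h1 : (1:ℕ) ≤ τ i := Nat.one_le_iff_ne_zero.2 hv
          rw [Nat.cast_sub h1]
          push_cast
          ring
        · simp only [if_neg hne, natScript, hτ'w i hne, add_zero]
      rw [Finset.sum_congr rfl (fun i _ => hptw i), Finset.sum_add_distrib,
        Finset.sum_ite_eq' Finset.univ v (fun _ => G.redLap v j)]
      simp
    have hsum' : ∑ i, τ' i = m := by
      have h1 : ∑ i, τ i = τ v + ∑ i ∈ Finset.univ.erase v, τ i :=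
        (Finset.add_sum_erase _ _ (Finset.mem_univ v)).symm
      have h2 : ∑ i, τ' i = τ' v + ∑ i ∈ Finset.univ.erase v, τ' i :=
        (Finset.add_sum_erase _ _ (Finset.mem_univ v)).symm
      have h3 : ∑ i ∈ Finset.univ.erase v, τ' i = ∑ i ∈ Finset.univ.erase v, τ i :=
        Finset.sum_congr rfl fun i hi => hτ'w i (Finset.ne_of_mem_erase hi)
      have h4 : (1:ℕ) ≤ τ v := Nat.one_le_iff_ne_zero.2 hv
      omega
    have hx' : ∀ w, G.cmax w + Matrix.vecMul (natScript τ') G.redLap w ≤ G.fire x v w := by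
      intro w
      rw [hvecτ', fire_apply]
      have := hx w
      omega
    obtain ⟨s, hsL, hsC, hsA⟩ := ih τ' hsum' (G.fire x v) hx'
    refine ⟨v :: s, ⟨hact, hsL⟩, ?_, ?_⟩
    · intro i
      rcases eq_or_ne i v with rfl | hne
      · rw [List.count_cons_self, hsC, hτ'v]
        have h4 : (1:ℕ) ≤ τ i := Nat.one_le_iff_ne_zero.2 hv
        omega
      · rw [List.count_cons_of_ne hne.symm, hsC, hτ'w i hne]
    · show G.applySeq (G.fire x v) s = _
      rw [hsA]
      funext w
      rw [hvecτ', fire_apply]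
      ring

/-! ### Every vertex is reachable from the support of a strongly positive script -/

lemma reach_from_positive {σ : Fin n → ℕ} (hσ : G.GStronglyPositive σ) (v : Fin (n + 1)) :
    ∃ i : Fin n, Matrix.vecMul (natScript σ) G.redLap i ≠ 0 ∧ G.Reach i.castSucc v := by
  classical
  set anc : Fin (n + 1) → Finset (Fin (n + 1)) :=
    fun j => Finset.univ.filter (fun w => G.Reach w j) with hanc
  have hT : v ∈ Finset.univ.filter (fun w => G.Reach w v) := by
    simp only [Finset.mem_filter, Finset.mem_univ, true_and]
    exact Relation.ReflTransGen.refl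
  obtain ⟨u0, hu0T, hu0min⟩ := Finset.exists_min_image
    (Finset.univ.filter (fun w => G.Reach w v)) (fun w => (anc w).card) ⟨v, hT⟩
  have hu0v : G.Reach u0 v := by simpa using hu0T
  set S : Set (Fin (n + 1)) := {j | G.Reach u0 j ∧ G.Reach j u0} with hSdef
  have hsource : G.IsSourceComponent S := by
    refine ⟨⟨u0, rfl⟩, ?_⟩
    intro j hj k hk
    by_contra hjk
    have hjk' : 0 < G.e j k := Nat.pos_of_ne_zero hjk
    have hju0 : G.Reach j u0 := Relation.ReflTransGen.head hjk' hk.2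
    have hjv : G.Reach j v := hju0.trans hu0v
    have hjT : j ∈ Finset.univ.filter (fun w => G.Reach w v) := by simpa using hjv
    have hmin := hu0min j hjT
    have hss : anc j ⊂ anc u0 := by
      constructor
      · intro w hw
        simp only [hanc, Finset.mem_filter, Finset.mem_univ, true_and] at hw ⊢
        exact hw.trans hju0
      · intro hsub
        have hu0mem : u0 ∈ anc u0 := by
          simp only [hanc, Finset.mem_filter, Finset.mem_univ, true_and]
          exact Relation.ReflTransGen.refl
        have : u0 ∈ anc j := hsub hu0mem
        simp only [hanc, Finset.mem_filter, Finset.mem_univ, true_and] at this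
        exact hj ⟨this, hju0⟩
    exact absurd hmin (not_le.2 (Finset.card_lt_card hss))
  obtain ⟨i, hiS, hine⟩ := hσ.2 S hsource
  exact ⟨i, hine, hiS.2.trans hu0v⟩

/-- Reachability in at most `d` steps. -/
def reachN (G : SinkDigraph n) : ℕ → Fin (n + 1) → Fin (n + 1) → Prop
  | 0, u, v => u = v
  | (d + 1), u, v => G.reachN d u v ∨ ∃ w, G.reachN d u w ∧ 0 < G.e w v

lemma reachN_mono {d d' : ℕ} (h : d ≤ d') {p q : Fin (n + 1)} (hr : G.reachN d p q) :
    G.reachN d' p q := by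
  induction d' with
  | zero =>
    have hd0 : d = 0 := Nat.le_zero.1 h
    subst hd0
    exact hr
  | succ d' ih =>
    rcases Nat.lt_or_ge d (d' + 1) with hlt | hge
    · exact Or.inl (ih (by omega))
    · have : d = d' + 1 := by omega
      subst this
      exact hr

lemma reach_exists_reachN {p q : Fin (n + 1)} (h : G.Reach p q) :
    ∃ d, G.reachN d p q := by
  induction h with
  | refl => exact ⟨0, rfl⟩
  | tail _ hstep ih =>
    obtain ⟨d, hd⟩ := ih
    exact ⟨d + 1, Or.inr ⟨_, hd, hstep⟩⟩

/-! ### Firing a vertex many times, and firing a set of vertices -/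

lemma fire_many (v : Fin n) : ∀ (m : ℕ) (x : Fin n → ℤ),
    ((m : ℤ) * G.redLap v v ≤ x v) →
    G.Legal x (List.replicate m v) ∧
      G.applySeq x (List.replicate m v) = fun j => x j - (m : ℤ) * G.redLap v j := by
  intro m
  induction m with
  | zero => intro x _; exact ⟨trivial, by funext j; simp [applySeq]⟩
  | succ m ih =>
    intro x hx
    have hd := G.redLap_diag_nonneg v
    have hact : G.redLap v v ≤ x v := by push_cast at hx; nlinarith
    have hfx : (m : ℤ) * G.redLap v v ≤ G.fire x v v := by
      rw [fire_apply]
      push_cast at hx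
      linarith
    obtain ⟨ihL, ihA⟩ := ih (G.fire x v) hfx
    constructor
    · exact ⟨hact, ihL⟩
    · show G.applySeq (G.fire x v) (List.replicate m v) = _
      rw [ihA]
      funext j
      rw [fire_apply]
      push_cast
      ring

lemma fire_finset (m : ℕ) (F : Finset (Fin n)) : ∀ (x : Fin n → ℤ),
    (∀ v ∈ F, (m : ℤ) * G.redLap v v ≤ x v) →
    ∃ s, G.Legal x s ∧
      G.applySeq x s = fun j => x j - (m : ℤ) * ∑ v ∈ F, G.redLap v j := by
  classical
  induction F using Finset.induction_on with
  | empty => intro x _; exact ⟨[], trivial, by funext j; simp [applySeq]⟩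
  | insert v F' hvF ih =>
    intro x hx
    obtain ⟨h1L, h1A⟩ := G.fire_many v m x (hx v (Finset.mem_insert_self v F'))
    have hyF' : ∀ w ∈ F', (m : ℤ) * G.redLap w w ≤ G.applySeq x (List.replicate m v) w := by
      intro w hw
      have hwv : v ≠ w := fun h => hvF (h ▸ hw)
      have hoff := G.redLap_offdiag_nonpos hwv
      have hxw := hx w (Finset.mem_insert_of_mem hw)
      rw [h1A]
      have hm : (0:ℤ) ≤ (m:ℤ) := by positivity
      simp only
      nlinarith
    obtain ⟨s2, hs2L, hs2A⟩ := ih (G.applySeq x (List.replicate m v)) hyF'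
    refine ⟨List.replicate m v ++ s2, ?_, ?_⟩
    · rw [Legal_append]
      exact ⟨h1L, hs2L⟩
    · rw [G.applySeq_append, hs2A]
      funext j
      rw [h1A]
      simp only
      rw [Finset.sum_insert hvF]
      ring

/-! ### Flooding: pumping chips everywhere -/

lemma sum_redLap_le_diag {F : Finset (Fin n)} {j : Fin n} (hj : j ∈ F) :
    ∑ w ∈ F, G.redLap w j ≤ G.redLap j j := by
  rw [← Finset.add_sum_erase _ _ hj]
  have : ∑ w ∈ F.erase j, G.redLap w j ≤ 0 :=
    Finset.sum_nonpos fun w hw => G.redLap_offdiag_nonpos (Finset.ne_of_mem_erase hw)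
  omega

lemma sum_redLap_nonpos {F : Finset (Fin n)} {j : Fin n} (hj : j ∉ F) :
    ∑ w ∈ F, G.redLap w j ≤ 0 :=
  Finset.sum_nonpos fun w hw => G.redLap_offdiag_nonpos (fun h => hj (h ▸ hw))

lemma sum_redLap_le_neg_one {F : Finset (Fin n)} {j p : Fin n} (hj : j ∉ F) (hp : p ∈ F)
    (he : 0 < G.e p.castSucc j.castSucc) : ∑ w ∈ F, G.redLap w j ≤ -1 := by
  rw [← Finset.add_sum_erase _ _ hp]
  have h1 : ∑ w ∈ F.erase p, G.redLap w j ≤ 0 :=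
    Finset.sum_nonpos fun w hw =>
      G.redLap_offdiag_nonpos (fun h => hj (h ▸ (Finset.mem_erase.1 hw).2))
  have hpj : p ≠ j := fun h => hj (h ▸ hp)
  have h2 : G.redLap p j ≤ -1 := by
    rw [G.redLap_offdiag hpj]
    have : (1:ℤ) ≤ (G.e p.castSucc j.castSucc : ℤ) := by exact_mod_cast he
    omega
  omega

lemma flood {σ : Fin n → ℕ} (hσ : G.GStronglyPositive σ) {a : Fin n → ℤ} (ha : 0 ≤ a) :
    ∀ (d : ℕ) (N : ℤ), 0 ≤ N → ∃ K : ℕ, ∀ k : ℕ, K ≤ k → ∃ y : Fin n → ℤ,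
      (∃ s, G.Legal (fun v => a v + (k : ℤ) * Matrix.vecMul (natScript σ) G.redLap v) s ∧
        G.applySeq (fun v => a v + (k : ℤ) * Matrix.vecMul (natScript σ) G.redLap v) s = y)
      ∧ 0 ≤ y
      ∧ ∀ v : Fin n, (∃ i : Fin n, Matrix.vecMul (natScript σ) G.redLap i ≠ 0 ∧
          G.reachN d i.castSucc v.castSucc) → N ≤ y v := by
  classical
  have hu0 : 0 ≤ Matrix.vecMul (natScript σ) G.redLap := hσ.1.1
  intro d
  induction d with
  | zero =>
    intro N hN
    refine ⟨N.toNat, fun k hk => ?_⟩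
    refine ⟨_, ⟨[], trivial, rfl⟩, ?_, ?_⟩
    · intro v
      have h1 := ha v
      have h2 := hu0 v
      simp only [Pi.zero_apply] at h1 h2 ⊢
      simp only [applySeq]
      have h6 : 0 ≤ (k:ℤ) * Matrix.vecMul (natScript σ) G.redLap v := by positivity
      omega
    · rintro v ⟨i, hui, hri⟩
      have hiv : i = v := Fin.castSucc_injective n hri
      subst hiv
      have h2 := hu0 i
      simp only [Pi.zero_apply] at h2
      have h3 : 1 ≤ Matrix.vecMul (natScript σ) G.redLap i := by omega
      have h4 : N ≤ (k : ℤ) := le_trans (Int.self_le_toNat N) (by exact_mod_cast hk)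
      have h5 := ha i
      simp only [Pi.zero_apply] at h5
      simp only [applySeq]
      nlinarith
  | succ d ih =>
    intro N hN
    set m : ℕ := N.toNat with hm
    have hmN : N ≤ (m : ℤ) := Int.self_le_toNat N
    have hmN' : (m : ℤ) = N := by omega
    set N' : ℤ := N + (m : ℤ) * G.degSum with hN'def
    have hD := G.degSum_nonneg
    have hN'0 : 0 ≤ N' := by positivity
    obtain ⟨K, hK⟩ := ih N' hN'0
    refine ⟨K, fun k hk => ?_⟩
    obtain ⟨y, ⟨s, hsL, hsA⟩, hy0, hybig⟩ := hK k hk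
    set F : Finset (Fin n) := Finset.univ.filter (fun w : Fin n =>
      ∃ i : Fin n, Matrix.vecMul (natScript σ) G.redLap i ≠ 0 ∧
        G.reachN d i.castSucc w.castSucc) with hF
    have hFbig : ∀ w ∈ F, N' ≤ y w := by
      intro w hw
      refine hybig w ?_
      simpa [hF] using hw
    have hFfire : ∀ w ∈ F, (m : ℤ) * G.redLap w w ≤ y w := by
      intro w hw
      have h1 : (m:ℤ) * G.redLap w w ≤ (m:ℤ) * G.degSum :=
        mul_le_mul_of_nonneg_left (G.diag_le_degSum w) (by positivity)
      have := hFbig w hw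
      omega
    obtain ⟨s2, hs2L, hs2A⟩ := G.fire_finset m F y hFfire
    refine ⟨G.applySeq y s2, ⟨s ++ s2, ?_, ?_⟩, ?_, ?_⟩
    · rw [Legal_append]
      exact ⟨hsL, hsA ▸ hs2L⟩
    · rw [G.applySeq_append, hsA]
    · intro j
      rw [hs2A]
      simp only [Pi.zero_apply]
      by_cases hj : j ∈ F
      · have h1 := G.sum_redLap_le_diag hj
        have h2 := hFbig j hj
        have h3 : (m:ℤ) * G.redLap j j ≤ (m:ℤ) * G.degSum :=
          mul_le_mul_of_nonneg_left (G.diag_le_degSum j) (by positivity)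
        have h4 : (m:ℤ) * ∑ w ∈ F, G.redLap w j ≤ (m:ℤ) * G.redLap j j :=
          mul_le_mul_of_nonneg_left h1 (by positivity)
        omega
      · have h1 := G.sum_redLap_nonpos hj
        have h2 : (m:ℤ) * ∑ w ∈ F, G.redLap w j ≤ 0 :=
          mul_nonpos_of_nonneg_of_nonpos (by positivity) h1
        have h3 := hy0 j
        simp only [Pi.zero_apply] at h3
        omega
    · rintro v ⟨i, hui, hri⟩
      rw [hs2A]
      simp only
      by_cases hv : v ∈ F
      · have h1 := G.sum_redLap_le_diag hv
        have h2 := hFbig v hv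
        have h3 : (m:ℤ) * ∑ w ∈ F, G.redLap w v ≤ (m:ℤ) * G.degSum := by
          refine le_trans (mul_le_mul_of_nonneg_left h1 (by positivity)) ?_
          exact mul_le_mul_of_nonneg_left (G.diag_le_degSum v) (by positivity)
        omega
      · rcases hri with hri | ⟨z, hdz, hez⟩
        · exact absurd (by simp [hF]; exact ⟨i, hui, hri⟩) hv
        · have hzlast : z ≠ Fin.last n := by
            intro h
            rw [h, G.sink_no_out] at hez
            exact lt_irrefl 0 hez
          obtain ⟨p, rfl⟩ := Fin.exists_castSucc_eq.2 hzlast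
          have hpF : p ∈ F := by
            simp only [hF, Finset.mem_filter, Finset.mem_univ, true_and]
            exact ⟨i, hui, hdz⟩
          have h1 := G.sum_redLap_le_neg_one hv hpF hez
          have h2 : (m:ℤ) * ∑ w ∈ F, G.redLap w v ≤ (m:ℤ) * (-1) :=
            mul_le_mul_of_nonneg_left h1 (by positivity)
          have h3 := hy0 v
          simp only [Pi.zero_apply] at h3
          omega

lemma exists_big_reachable {σ : Fin n → ℕ} (hσ : G.GStronglyPositive σ) {a : Fin n → ℤ}
    (ha : 0 ≤ a) :
    ∃ (k : ℕ) (s : List (Fin n)),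
      G.Legal (fun v => a v + (k : ℤ) * Matrix.vecMul (natScript σ) G.redLap v) s ∧
      ∀ v, G.redLap v v ≤
        G.applySeq (fun v => a v + (k : ℤ) * Matrix.vecMul (natScript σ) G.redLap v) s v := by
  classical
  have hchoice : ∀ v : Fin n, ∃ (i : Fin n) (d : ℕ),
      Matrix.vecMul (natScript σ) G.redLap i ≠ 0 ∧ G.reachN d i.castSucc v.castSucc := by
    intro v
    obtain ⟨i, hui, hreach⟩ := G.reach_from_positive hσ v.castSucc
    obtain ⟨d, hd⟩ := G.reach_exists_reachN hreach
    exact ⟨i, d, hui, hd⟩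
  choose iv dv hui hdv using hchoice
  set dmax : ℕ := Finset.univ.sup dv with hdmax
  obtain ⟨K, hK⟩ := G.flood hσ ha dmax G.degSum G.degSum_nonneg
  obtain ⟨y, ⟨s, hsL, hsA⟩, hy0, hybig⟩ := hK K (le_refl K)
  refine ⟨K, s, hsL, fun v => ?_⟩
  rw [hsA]
  refine le_trans (G.diag_le_degSum v) (hybig v ⟨iv v, hui v, ?_⟩)
  exact G.reachN_mono (Finset.le_sup (Finset.mem_univ v)) (hdv v)

end SinkDigraph

open SinkDigraph Matrix

theorem critical_iff_recurrent (n : ℕ) (G : SinkDigraph n) (a : Fin n → ℤ)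
    (ha : G.IsStable a) (σ : Fin n → ℕ) (hσ : G.GStronglyPositive σ) :
    (G.IsCritical a ↔ G.Stabilizes (a + Matrix.vecMul (natScript σ) G.redLap) a) ∧
      (G.IsCritical a →
        ∀ s : List (Fin n),
          G.Legal (a + Matrix.vecMul (natScript σ) G.redLap) s →
          G.IsStable (G.applySeq (a + Matrix.vecMul (natScript σ) G.redLap) s) →
          script s = natScript σ) := by
  classical
  set u : Fin n → ℤ := Matrix.vecMul (natScript σ) G.redLap with hu
  have hu0 : 0 ≤ u := hσ.1.1
  have ha0 : 0 ≤ a := fun i => (ha i).1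
  have hau0 : 0 ≤ a + u := by
    intro v
    have h1 := ha0 v; have h2 := hu0 v
    simp only [Pi.zero_apply, Pi.add_apply] at *
    omega
  have forward : G.IsCritical a → G.Stabilizes (a + u) a := by
    rintro ⟨c, hc, t, htL, htA, -⟩
    obtain ⟨s1, hs1L, hs1C, hs1A⟩ := G.legal_script (∑ i, σ i) σ rfl (G.cmax + c + u)
      (fun v => by
        have h1 := hc v
        simp only [Pi.add_apply, Pi.zero_apply] at h1 ⊢
        rw [← hu]
        omega)
    have hs1A' : G.applySeq (G.cmax + c + u) s1 = G.cmax + c := by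
      rw [hs1A]
      funext v
      simp only [Pi.add_apply, ← hu]
      ring
    have hpath1L : G.Legal (G.cmax + c + u) (s1 ++ t) := by
      rw [Legal_append, hs1A']
      exact ⟨hs1L, htL⟩
    have hpath1A : G.applySeq (G.cmax + c + u) (s1 ++ t) = a := by
      rw [G.applySeq_append, hs1A', htA]
    obtain ⟨b, q, hqL, hqA, hqS⟩ := G.exists_stabilizes hau0
    have htL2 : G.Legal (G.cmax + c + u) t := G.Legal_add_of_nonneg htL hu0
    have htA2 : G.applySeq (G.cmax + c + u) t = a + u := by
      rw [G.applySeq_add, htA]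
    have hpath2L : G.Legal (G.cmax + c + u) (t ++ q) := by
      rw [Legal_append, htA2]
      exact ⟨htL2, hqL⟩
    have hpath2A : G.applySeq (G.cmax + c + u) (t ++ q) = b := by
      rw [G.applySeq_append, htA2, hqA]
    have hstab1 : G.IsStable (G.applySeq (G.cmax + c + u) (s1 ++ t)) := by
      rw [hpath1A]; exact ha
    have hstab2 : G.IsStable (G.applySeq (G.cmax + c + u) (t ++ q)) := by
      rw [hpath2A]; exact hqS
    have hba : b = a := by
      have h := G.abelian_endpoint hpath2L hstab2 hpath1L hstab1
      rw [hpath2A, hpath1A] at h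
      exact h
    exact ⟨q, hqL, by rw [hqA, hba], ha⟩
  have backward : G.Stabilizes (a + u) a → G.IsCritical a := by
    intro hst
    have hiter : ∀ k : ℕ, G.Stabilizes (fun v => a v + (k : ℤ) * u v) a := by
      intro k
      induction k with
      | zero =>
        refine ⟨[], trivial, ?_, ha⟩
        funext v
        simp [applySeq]
      | succ k ihk =>
        obtain ⟨s, hsL, hsA, -⟩ := hst
        obtain ⟨s', hs'L, hs'A, -⟩ := ihk
        have hky : (0 : Fin n → ℤ) ≤ (fun v => (k : ℤ) * u v) := by
          intro v
          have h2 := hu0 v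
          simp only [Pi.zero_apply] at h2 ⊢
          positivity
        have heq : (fun v => a v + ((k : ℕ) + 1 : ℤ) * u v)
            = (a + u) + (fun v => (k : ℤ) * u v) := by
          funext v
          simp only [Pi.add_apply]
          ring
        have heq2 : ((k + 1 : ℕ) : ℤ) = ((k : ℕ) + 1 : ℤ) := by push_cast; ring
        have hgoalstart : (fun v => a v + ((k + 1 : ℕ) : ℤ) * u v)
            = (a + u) + (fun v => (k : ℤ) * u v) := by
          rw [← heq]
          funext v
          rw [heq2]
        have hmidA : G.applySeq ((a + u) + (fun v => (k : ℤ) * u v)) s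
            = (fun v => a v + (k : ℤ) * u v) := by
          rw [G.applySeq_add, hsA]
          funext v
          simp only [Pi.add_apply]
        refine ⟨s ++ s', ?_, ?_, ha⟩
        · rw [hgoalstart, Legal_append]
          refine ⟨G.Legal_add_of_nonneg hsL hky, ?_⟩
          rw [hmidA]
          exact hs'L
        · rw [hgoalstart, G.applySeq_append, hmidA, hs'A]
    obtain ⟨k, s0, hs0L, hs0big⟩ := G.exists_big_reachable hσ ha0
    rw [← hu] at hs0L hs0big
    have hstart0 : 0 ≤ (fun v => a v + (k : ℤ) * u v) := by
      intro v
      have h1 := ha0 v; have h2 := hu0 v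
      simp only [Pi.zero_apply] at h1 h2 ⊢
      positivity
    have hx0nonneg : 0 ≤ G.applySeq (fun v => a v + (k : ℤ) * u v) s0 :=
      G.applySeq_nonneg hs0L hstart0
    obtain ⟨b, q, hqL, hqA, hqS⟩ := G.exists_stabilizes hx0nonneg
    have hcombL : G.Legal (fun v => a v + (k : ℤ) * u v) (s0 ++ q) := by
      rw [Legal_append]
      exact ⟨hs0L, hqL⟩
    have hcombA : G.applySeq (fun v => a v + (k : ℤ) * u v) (s0 ++ q) = b := by
      rw [G.applySeq_append, hqA]
    obtain ⟨s', hs'L, hs'A, -⟩ := hiter k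
    have hcombS : G.IsStable (G.applySeq (fun v => a v + (k : ℤ) * u v) (s0 ++ q)) := by
      rw [hcombA]; exact hqS
    have hs'S : G.IsStable (G.applySeq (fun v => a v + (k : ℤ) * u v) s') := by
      rw [hs'A]; exact ha
    have hba : b = a := by
      have h := G.abelian_endpoint hcombL hcombS hs'L hs'S
      rw [hcombA, hs'A] at h
      exact h
    refine ⟨G.applySeq (fun v => a v + (k : ℤ) * u v) s0 - G.cmax, ?_, ?_⟩
    · intro v
      have h1 := hs0big v
      have h2 := G.cmax_eq v
      simp only [Pi.zero_apply, Pi.sub_apply]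
      omega
    · have hxx : G.cmax + (G.applySeq (fun v => a v + (k : ℤ) * u v) s0 - G.cmax)
          = G.applySeq (fun v => a v + (k : ℤ) * u v) s0 := by
        funext v
        simp only [Pi.add_apply, Pi.sub_apply]
        ring
      rw [hxx]
      exact ⟨q, hqL, by rw [hqA, hba], ha⟩
  refine ⟨⟨forward, backward⟩, ?_⟩
  intro hcrit s hsL hsS
  obtain ⟨s0, hs0L, hs0A, -⟩ := forward hcrit
  have hs0S : G.IsStable (G.applySeq (a + u) s0) := by rw [hs0A]; exact ha
  have hcnt := G.abelian hsL hsS hs0L hs0S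
  have hscript : script s0 = natScript σ := by
    apply G.vecMul_redLap_injective
    have h1 := G.applySeq_eq_sub_vecMul s0 (a + u)
    rw [hs0A] at h1
    funext j
    have h2 := congrFun h1 j
    simp only [Pi.sub_apply, Pi.add_apply] at h2
    have h3 : Matrix.vecMul (natScript σ) G.redLap j = u j := by rw [hu]
    omega
  funext i
  have h4 := congrFun hscript i
  simp only [script] at h4 ⊢
  rw [hcnt i]
  exact h4
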